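/- Let q be a prime power, F_q the finite field with q elements, and χ a nontrivial additive character of F_q with values in the complex numbers. Then the character sum over invertible matrices Σ_{B ∈ GL_3(F_q)} χ(b_{11}) = -q^6 + q^5 + q^4 - q^3, where b_{11} denotes the (1,1) entry of B. -/

import Mathlib

set_option linter.unusedSectionVars false

open Matrix Finset

section Aux

variable {F : Type*} [Field F] [Fintype F] [DecidableEq F]

/-- units of a monoid are equivalent to the subtype of unit elements -/
noncomputable def unitsEquivIsUnit (M : Type*) [Monoid M] : Mˣ ≃ {x : M // IsUnit x} where
  toFun u := ⟨u, u.isUnit⟩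
  invFun x := x.2.unit
  left_inv u := Units.ext (IsUnit.unit_spec _)
  right_inv x := Subtype.ext x.2.unit_spec

/-- averaging lemma, version A -/
lemma avgA {G : Type*} [Fintype G] (f g : G → ℂ) (e : F → G ≃ G)
    (h : ∀ B, ∑ t : F, f (e t B) = (Fintype.card F : ℂ) * g B) :
    ∑ B, f B = ∑ B, g B := by
  have hq : (Fintype.card F : ℂ) ≠ 0 := Nat.cast_ne_zero.mpr Fintype.card_ne_zero
  apply mul_left_cancel₀ hq
  calc (Fintype.card F : ℂ) * ∑ B, f B
      = ∑ _t : F, ∑ B, f B := by rw [Finset.sum_const, Finset.card_univ, nsmul_eq_mul]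
    _ = ∑ t : F, ∑ B, f (e t B) := by
        refine Finset.sum_congr rfl fun t _ => (Equiv.sum_comp (e t) f).symm
    _ = ∑ B, ∑ t : F, f (e t B) := Finset.sum_comm
    _ = ∑ B, (Fintype.card F : ℂ) * g B := Finset.sum_congr rfl fun B _ => h B
    _ = (Fintype.card F : ℂ) * ∑ B, g B := by rw [Finset.mul_sum]

/-- averaging lemma, version B -/
lemma avgB {G : Type*} [Fintype G] (f g : G → ℂ) (e : F → G ≃ G)
    (h : ∀ B, ∑ t : F, f (e t B) = g B) :
    ∑ B, g B = (Fintype.card F : ℂ) * ∑ B, f B := by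
  calc ∑ B, g B = ∑ B, ∑ t : F, f (e t B) := Finset.sum_congr rfl fun B _ => (h B).symm
    _ = ∑ t : F, ∑ B, f (e t B) := Finset.sum_comm
    _ = ∑ _t : F, ∑ B, f B := by
        refine Finset.sum_congr rfl fun t _ => Equiv.sum_comp (e t) f
    _ = (Fintype.card F : ℂ) * ∑ B, f B := by
        rw [Finset.sum_const, Finset.card_univ, nsmul_eq_mul]

/-- character sum over a line -/
lemma char_shift (χ : AddChar F ℂ) (hχ : χ ≠ 1) (x c : F) :
    ∑ t : F, χ (x + t * c) = if c = 0 then (Fintype.card F : ℂ) * χ x else 0 := by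
  by_cases hc : c = 0
  · simp [hc, Finset.sum_const, Finset.card_univ, nsmul_eq_mul]
  · have h0 : ∑ t : F, χ (c * t) = 0 :=
      AddChar.sum_eq_zero_of_ne_one (AddChar.IsPrimitive.of_ne_one hχ hc)
    simp only [hc, if_false]
    calc ∑ t : F, χ (x + t * c) = ∑ t : F, χ x * χ (c * t) := by
          refine Finset.sum_congr rfl fun t _ => ?_
          rw [AddChar.map_add_eq_mul, mul_comm t c]
      _ = χ x * ∑ t : F, χ (c * t) := by rw [Finset.mul_sum]
      _ = 0 := by rw [h0, mul_zero]

/-- sum over unique root of a linear equation -/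
lemma sum_root (b c : F) (hc : c ≠ 0) (v : ℂ) :
    ∑ t : F, (if b + t * c = 0 then v else 0) = v := by
  have key : ∀ t : F, (b + t * c = 0) ↔ (t = -b / c) := by
    intro t
    constructor
    · intro h
      field_simp
      linear_combination h
    · rintro rfl
      field_simp
      ring
  calc ∑ t : F, (if b + t * c = 0 then v else 0)
      = ∑ t : F, (if t = -b / c then v else 0) :=
        Finset.sum_congr rfl fun t _ => if_congr (key t) rfl rfl
    _ = v := by rw [Finset.sum_ite_eq' Finset.univ (-b/c) (fun _ => v)]; simp

end Aux

section Trans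

variable {F : Type*} [Field F] [Fintype F] [DecidableEq F]

/-- transvection as a unit in GL -/
def tGL (i j : Fin 3) (h : i ≠ j) (t : F) : GL (Fin 3) F :=
  ⟨transvection i j t, transvection i j (-t),
   by rw [transvection_mul_transvection_same _ _ h, add_neg_cancel, transvection_zero],
   by rw [transvection_mul_transvection_same _ _ h, neg_add_cancel, transvection_zero]⟩

@[simp] lemma tGL_val (i j : Fin 3) (h : i ≠ j) (t : F) :
    ((tGL i j h t : GL (Fin 3) F) : Matrix (Fin 3) (Fin 3) F) = transvection i j t := rfl

lemma mul_val (A B : GL (Fin 3) F) :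
    ((A * B : GL (Fin 3) F) : Matrix (Fin 3) (Fin 3) F)
      = (A : Matrix (Fin 3) (Fin 3) F) * (B : Matrix (Fin 3) (Fin 3) F) := rfl

lemma GL_det_ne_zero (B : GL (Fin 3) F) : (B : Matrix (Fin 3) (Fin 3) F).det ≠ 0 :=
  ((Matrix.isUnit_iff_isUnit_det _).mp B.isUnit).ne_zero

lemma entry00_ne_zero (B : GL (Fin 3) F) (h1 : (B : Matrix (Fin 3) (Fin 3) F) 1 0 = 0)
    (h2 : (B : Matrix (Fin 3) (Fin 3) F) 2 0 = 0) :
    (B : Matrix (Fin 3) (Fin 3) F) 0 0 ≠ 0 := by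
  intro h0
  apply GL_det_ne_zero B
  rw [Matrix.det_fin_three, h0, h1, h2]
  ring

end Trans

section Blocks

variable {F : Type*} [Field F] [Fintype F] [DecidableEq F]

/-- 9 coordinates of a 3x3 matrix -/
def e9 (F : Type*) : (F×F×F×F×F×F×F×F×F) ≃ Matrix (Fin 3) (Fin 3) F where
  toFun x := !![x.1, x.2.2.2.2.2.1, x.2.2.2.2.2.2.1;
                x.2.2.2.2.2.2.2.1, x.2.1, x.2.2.1;
                x.2.2.2.2.2.2.2.2, x.2.2.2.1, x.2.2.2.2.1]
  invFun M := (M 0 0, M 1 1, M 1 2, M 2 1, M 2 2, M 0 1, M 0 2, M 1 0, M 2 0)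
  left_inv x := by
    obtain ⟨a, e, f, h, i, b, c, d, g⟩ := x
    simp
  right_inv M := by
    ext i j
    fin_cases i <;> fin_cases j <;> simp

/-- 4 coordinates of a 2x2 matrix -/
def e4 (F : Type*) : (F×F×F×F) ≃ Matrix (Fin 2) (Fin 2) F where
  toFun x := !![x.1, x.2.1; x.2.2.1, x.2.2.2]
  invFun M := (M 0 0, M 0 1, M 1 0, M 1 1)
  left_inv x := by obtain ⟨a, b, c, d⟩ := x; simp
  right_inv M := by ext i j; fin_cases i <;> fin_cases j <;> simp

end Blocks

section Count

variable {F : Type*} [Field F] [Fintype F] [DecidableEq F]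

/-- the number of invertible 2x2 matrices, as a complex number -/
lemma count_GL2 :
    ∑ e : F, ∑ f : F, ∑ h : F, ∑ i : F, (if e * i - f * h ≠ 0 then (1:ℂ) else 0)
      = ((Fintype.card F ^ 2 - 1) * (Fintype.card F ^ 2 - Fintype.card F) : ℕ) := by
  classical
  have h1 : ∑ e : F, ∑ f : F, ∑ h : F, ∑ i : F, (if e * i - f * h ≠ 0 then (1:ℂ) else 0)
      = ∑ x : F×F×F×F, (if ((e4 F) x).det ≠ 0 then (1:ℂ) else 0) := by
    rw [Fintype.sum_prod_type, ]
    refine Finset.sum_congr rfl fun e _ => ?_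
    rw [Fintype.sum_prod_type]
    refine Finset.sum_congr rfl fun f _ => ?_
    rw [Fintype.sum_prod_type]
    refine Finset.sum_congr rfl fun h _ => ?_
    refine Finset.sum_congr rfl fun i _ => ?_
    simp [e4, Matrix.det_fin_two_of]
  have h2 : ∑ x : F×F×F×F, (if ((e4 F) x).det ≠ 0 then (1:ℂ) else 0)
      = ∑ M : Matrix (Fin 2) (Fin 2) F, (if M.det ≠ 0 then (1:ℂ) else 0) :=
    Equiv.sum_comp (e4 F) (fun M => if M.det ≠ 0 then (1:ℂ) else 0)
  have h3 : ∑ M : Matrix (Fin 2) (Fin 2) F, (if M.det ≠ 0 then (1:ℂ) else 0)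
      = (Finset.univ.filter (fun M : Matrix (Fin 2) (Fin 2) F => M.det ≠ 0)).card := by
    rw [Finset.sum_boole]
  have e5 : (GL (Fin 2) F) ≃ {M : Matrix (Fin 2) (Fin 2) F // M.det ≠ 0} := by
    refine (unitsEquivIsUnit _).trans (Equiv.subtypeEquivRight fun M => ?_)
    rw [Matrix.isUnit_iff_isUnit_det, isUnit_iff_ne_zero]
  have h4 : (Finset.univ.filter (fun M : Matrix (Fin 2) (Fin 2) F => M.det ≠ 0)).card
      = Nat.card (GL (Fin 2) F) := by
    rw [Nat.card_eq_fintype_card, Fintype.card_congr e5, Fintype.card_subtype]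
  have h5 : Nat.card (GL (Fin 2) F)
      = (Fintype.card F ^ 2 - 1) * (Fintype.card F ^ 2 - Fintype.card F) := by
    rw [Matrix.card_GL_field 2, Fin.prod_univ_two]
    simp
  rw [h1, h2, h3, h4, h5]

/-- sum of a nontrivial character over nonzero elements -/
lemma sum_nonzero (χ : AddChar F ℂ) (hχ : χ ≠ 1) :
    ∑ a : F, (if a ≠ 0 then (χ a : ℂ) else 0) = -1 := by
  have h0 : ∑ a : F, χ a = 0 := AddChar.sum_eq_zero_of_ne_one hχ
  have : ∀ a : F, (if a ≠ 0 then (χ a : ℂ) else 0) = χ a - (if a = 0 then (χ a : ℂ) else 0) := by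
    intro a; by_cases h : a = 0 <;> simp [h]
  rw [Finset.sum_congr rfl fun a _ => this a, Finset.sum_sub_distrib, h0,
    Finset.sum_ite_eq' Finset.univ (0:F) (fun a => (χ a : ℂ))]
  simp

end Count

section Inner

variable {F : Type*} [Field F] [Fintype F] [DecidableEq F]

lemma innerSum9 (χ : AddChar F ℂ) (a e f h i : F) :
    ∑ b : F, ∑ c : F, ∑ d : F, ∑ g : F,
      (if ((!![a,b,c;d,e,f;g,h,i] : Matrix (Fin 3) (Fin 3) F).det ≠ 0
            ∧ d = 0 ∧ g = 0 ∧ b = 0 ∧ c = 0) then (χ a : ℂ) else 0)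
    = (if a ≠ 0 then (χ a : ℂ) else 0) * (if e * i - f * h ≠ 0 then (1:ℂ) else 0) := by
  rw [Finset.sum_eq_single (0:F) (fun b _ hb => by simp [hb]) (by simp)]
  rw [Finset.sum_eq_single (0:F) (fun c _ hc => by simp [hc]) (by simp)]
  rw [Finset.sum_eq_single (0:F) (fun d _ hd => by simp [hd]) (by simp)]
  rw [Finset.sum_eq_single (0:F) (fun g _ hg => by simp [hg]) (by simp)]
  have hdet : (!![a,0,0;0,e,f;0,h,i] : Matrix (Fin 3) (Fin 3) F).det = a * (e * i - f * h) := by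
    rw [Matrix.det_fin_three]
    simp
    ring
  rw [hdet]
  by_cases ha : a = 0 <;> by_cases hef : e * i - f * h = 0 <;>
    simp [ha, hef, mul_ne_zero_iff]

end Inner

section Convert

variable {F : Type*} [Field F] [Fintype F] [DecidableEq F]

lemma sum_GL_to_matrix (χ : AddChar F ℂ) :
    ∑ B : GL (Fin 3) F,
      (if ((B : Matrix (Fin 3) (Fin 3) F) 1 0 = 0 ∧ (B : Matrix (Fin 3) (Fin 3) F) 2 0 = 0
            ∧ (B : Matrix (Fin 3) (Fin 3) F) 0 1 = 0 ∧ (B : Matrix (Fin 3) (Fin 3) F) 0 2 = 0)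
        then χ ((B : Matrix (Fin 3) (Fin 3) F) 0 0) else 0)
  = ∑ M : Matrix (Fin 3) (Fin 3) F,
      (if (M.det ≠ 0 ∧ M 1 0 = 0 ∧ M 2 0 = 0 ∧ M 0 1 = 0 ∧ M 0 2 = 0)
        then χ (M 0 0) else 0) := by
  classical
  have key : ∀ M : Matrix (Fin 3) (Fin 3) F,
      (if IsUnit M then
        (if (M 1 0 = 0 ∧ M 2 0 = 0 ∧ M 0 1 = 0 ∧ M 0 2 = 0) then (χ (M 0 0) : ℂ) else 0)
       else 0)
      = (if (M.det ≠ 0 ∧ M 1 0 = 0 ∧ M 2 0 = 0 ∧ M 0 1 = 0 ∧ M 0 2 = 0)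
          then χ (M 0 0) else 0) := by
    intro M
    by_cases hU : IsUnit M
    · have hd : M.det ≠ 0 := ((Matrix.isUnit_iff_isUnit_det M).mp hU).ne_zero
      simp [hU, hd]
    · have hd : ¬ M.det ≠ 0 := by
        intro hdet
        exact hU ((Matrix.isUnit_iff_isUnit_det M).mpr (isUnit_iff_ne_zero.mpr hdet))
      simp [hU, hd]
  calc ∑ B : GL (Fin 3) F,
      (if ((B : Matrix (Fin 3) (Fin 3) F) 1 0 = 0 ∧ (B : Matrix (Fin 3) (Fin 3) F) 2 0 = 0
            ∧ (B : Matrix (Fin 3) (Fin 3) F) 0 1 = 0 ∧ (B : Matrix (Fin 3) (Fin 3) F) 0 2 = 0)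
        then χ ((B : Matrix (Fin 3) (Fin 3) F) 0 0) else 0)
      = ∑ M ∈ Finset.univ.filter (fun M : Matrix (Fin 3) (Fin 3) F => IsUnit M),
        (if (M 1 0 = 0 ∧ M 2 0 = 0 ∧ M 0 1 = 0 ∧ M 0 2 = 0) then χ (M 0 0) else 0) := by
        refine Finset.sum_nbij' (fun B : GL (Fin 3) F => (B : Matrix (Fin 3) (Fin 3) F))
          (fun M => if h : IsUnit M then h.unit else 1) ?_ ?_ ?_ ?_ ?_
        · intro B _
          simp only [Finset.mem_filter, Finset.mem_univ, true_and]
          exact B.isUnit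
        · intro M _; exact Finset.mem_univ _
        · intro B _
          have h : (if h : IsUnit ((B : GL (Fin 3) F) : Matrix (Fin 3) (Fin 3) F)
              then h.unit else 1) = B := by
            rw [dif_pos B.isUnit]; exact Units.ext B.isUnit.unit_spec
          exact h
        · intro M hM
          have h2 := (Finset.mem_filter.mp hM).2
          have h : ((if h : IsUnit M then h.unit else 1 : GL (Fin 3) F) :
              Matrix (Fin 3) (Fin 3) F) = M := by
            rw [dif_pos h2]; exact h2.unit_spec
          exact h
        · intro B _; rfl
    _ = ∑ M : Matrix (Fin 3) (Fin 3) F,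
        (if IsUnit M then
          (if (M 1 0 = 0 ∧ M 2 0 = 0 ∧ M 0 1 = 0 ∧ M 0 2 = 0) then χ (M 0 0) else 0)
         else 0) := Finset.sum_filter _ _
    _ = _ := Finset.sum_congr rfl fun M _ => key M

lemma matrix_sum_eval (χ : AddChar F ℂ) (hχ : χ ≠ 1) :
    ∑ M : Matrix (Fin 3) (Fin 3) F,
      (if (M.det ≠ 0 ∧ M 1 0 = 0 ∧ M 2 0 = 0 ∧ M 0 1 = 0 ∧ M 0 2 = 0)
        then χ (M 0 0) else 0)
    = -(((Fintype.card F ^ 2 - 1) * (Fintype.card F ^ 2 - Fintype.card F) : ℕ) : ℂ) := by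
  classical
  rw [← Equiv.sum_comp (e9 F) (fun M : Matrix (Fin 3) (Fin 3) F =>
      (if (M.det ≠ 0 ∧ M 1 0 = 0 ∧ M 2 0 = 0 ∧ M 0 1 = 0 ∧ M 0 2 = 0)
        then (χ (M 0 0) : ℂ) else 0))]
  simp only [Fintype.sum_prod_type, e9, Equiv.coe_fn_mk]
  simp only [Fin.isValue, Matrix.of_apply, Matrix.cons_val', Matrix.cons_val_zero,
    Matrix.empty_val', Matrix.cons_val_fin_one, Matrix.cons_val_one, Matrix.cons_val_two,
    Nat.succ_eq_add_one, Nat.reduceAdd, Matrix.tail_cons, Matrix.head_cons, Matrix.head_fin_const]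
  have hstep : (∑ a : F, ∑ e : F, ∑ f : F, ∑ h : F, ∑ i : F, ∑ b : F, ∑ c : F, ∑ d : F, ∑ g : F,
      (if ((!![a,b,c;d,e,f;g,h,i] : Matrix (Fin 3) (Fin 3) F).det ≠ 0
            ∧ d = 0 ∧ g = 0 ∧ b = 0 ∧ c = 0) then (χ a : ℂ) else 0))
    = ∑ a : F, ∑ e : F, ∑ f : F, ∑ h : F, ∑ i : F,
        ((if a ≠ 0 then (χ a : ℂ) else 0) * (if e * i - f * h ≠ 0 then (1:ℂ) else 0)) :=
    Finset.sum_congr rfl fun a _ => Finset.sum_congr rfl fun e _ =>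
      Finset.sum_congr rfl fun f _ => Finset.sum_congr rfl fun h _ =>
        Finset.sum_congr rfl fun i _ => innerSum9 χ a e f h i
  rw [hstep]
  simp only [← Finset.mul_sum]
  rw [← Finset.sum_mul, sum_nonzero χ hχ, count_GL2]
  rw [neg_one_mul]

end Convert

/-- For a nontrivial additive character `χ` of the finite field with `q` elements,
`∑_{B ∈ GL_3(F_q)} χ(b₁₁) = -q^6 + q^5 + q^4 - q^3`. -/
theorem charSum_GL3_rank_one (q : ℕ) (F : Type*) [Field F] [Fintype F] [DecidableEq F]
    (hq : Fintype.card F = q) (χ : AddChar F ℂ) (hχ : χ ≠ 1) :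
    ∑ B : GL (Fin 3) F, χ ((B : Matrix (Fin 3) (Fin 3) F) 0 0) =
      -(q : ℂ) ^ 6 + (q : ℂ) ^ 5 + (q : ℂ) ^ 4 - (q : ℂ) ^ 3 := by
  classical
  subst hq
  have h01 : (0 : Fin 3) ≠ 1 := by decide
  have h02 : (0 : Fin 3) ≠ 2 := by decide
  have h10 : (1 : Fin 3) ≠ 0 := by decide
  have h20 : (2 : Fin 3) ≠ 0 := by decide
  have h12 : (1 : Fin 3) ≠ 2 := by decide
  set qc : ℂ := ((Fintype.card F : ℕ) : ℂ) with hqc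
  -- Step 1 : introduce the condition B 1 0 = 0
  have step1 : ∑ B : GL (Fin 3) F, χ ((B : Matrix (Fin 3) (Fin 3) F) 0 0)
      = ∑ B : GL (Fin 3) F, (if (B : Matrix (Fin 3) (Fin 3) F) 1 0 = 0
          then (χ ((B : Matrix (Fin 3) (Fin 3) F) 0 0) : ℂ) else 0) := by
    refine avgA _ _ (fun t => Equiv.mulLeft (tGL 0 1 h01 t)) fun B => ?_
    simp only [Equiv.coe_mulLeft]
    have e1 : ∀ t : F, χ (((tGL 0 1 h01 t * B : GL (Fin 3) F) : Matrix (Fin 3) (Fin 3) F) 0 0)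
        = χ ((B : Matrix (Fin 3) (Fin 3) F) 0 0 + t * (B : Matrix (Fin 3) (Fin 3) F) 1 0) := by
      intro t
      rw [mul_val, tGL_val, transvection_mul_apply_same]
    rw [Finset.sum_congr rfl fun t _ => e1 t, char_shift χ hχ, mul_ite, mul_zero]
  -- Step 2 : introduce the condition B 2 0 = 0
  have step2 : ∑ B : GL (Fin 3) F, (if (B : Matrix (Fin 3) (Fin 3) F) 1 0 = 0
          then (χ ((B : Matrix (Fin 3) (Fin 3) F) 0 0) : ℂ) else 0)
      = ∑ B : GL (Fin 3) F, (if ((B : Matrix (Fin 3) (Fin 3) F) 1 0 = 0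
            ∧ (B : Matrix (Fin 3) (Fin 3) F) 2 0 = 0)
          then (χ ((B : Matrix (Fin 3) (Fin 3) F) 0 0) : ℂ) else 0) := by
    refine avgA _ _ (fun t => Equiv.mulLeft (tGL 0 2 h02 t)) fun B => ?_
    simp only [Equiv.coe_mulLeft]
    have key : ∀ t : F, (if ((tGL 0 2 h02 t * B : GL (Fin 3) F) : Matrix (Fin 3) (Fin 3) F) 1 0 = 0
          then (χ (((tGL 0 2 h02 t * B : GL (Fin 3) F) : Matrix (Fin 3) (Fin 3) F) 0 0) : ℂ) else 0)
        = (if (B : Matrix (Fin 3) (Fin 3) F) 1 0 = 0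
          then (χ ((B : Matrix (Fin 3) (Fin 3) F) 0 0 + t * (B : Matrix (Fin 3) (Fin 3) F) 2 0) : ℂ)
          else 0) := by
      intro t
      rw [mul_val, tGL_val, transvection_mul_apply_of_ne _ _ _ _ h10,
        transvection_mul_apply_same]
    refine (Finset.sum_congr rfl fun t _ => key t).trans ?_
    by_cases hb : (B : Matrix (Fin 3) (Fin 3) F) 1 0 = 0
    · simp only [hb, if_true, true_and]
      rw [char_shift χ hχ, mul_ite, mul_zero]
    · simp [hb]
  -- Step 3 : introduce the condition B 0 1 = 0
  have step3 : ∑ B : GL (Fin 3) F, (if ((B : Matrix (Fin 3) (Fin 3) F) 1 0 = 0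
            ∧ (B : Matrix (Fin 3) (Fin 3) F) 2 0 = 0)
          then (χ ((B : Matrix (Fin 3) (Fin 3) F) 0 0) : ℂ) else 0)
      = qc * ∑ B : GL (Fin 3) F, (if ((B : Matrix (Fin 3) (Fin 3) F) 1 0 = 0
            ∧ (B : Matrix (Fin 3) (Fin 3) F) 2 0 = 0
            ∧ (B : Matrix (Fin 3) (Fin 3) F) 0 1 = 0)
          then (χ ((B : Matrix (Fin 3) (Fin 3) F) 0 0) : ℂ) else 0) := by
    refine avgB _ _ (fun t => Equiv.mulRight (tGL 0 1 h01 t)) fun B => ?_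
    simp only [Equiv.coe_mulRight]
    have key : ∀ t : F, (if (((B * tGL 0 1 h01 t : GL (Fin 3) F) : Matrix (Fin 3) (Fin 3) F) 1 0 = 0
            ∧ ((B * tGL 0 1 h01 t : GL (Fin 3) F) : Matrix (Fin 3) (Fin 3) F) 2 0 = 0
            ∧ ((B * tGL 0 1 h01 t : GL (Fin 3) F) : Matrix (Fin 3) (Fin 3) F) 0 1 = 0)
          then (χ (((B * tGL 0 1 h01 t : GL (Fin 3) F) : Matrix (Fin 3) (Fin 3) F) 0 0) : ℂ) else 0)
        = (if ((B : Matrix (Fin 3) (Fin 3) F) 1 0 = 0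
            ∧ (B : Matrix (Fin 3) (Fin 3) F) 2 0 = 0
            ∧ (B : Matrix (Fin 3) (Fin 3) F) 0 1 + t * (B : Matrix (Fin 3) (Fin 3) F) 0 0 = 0)
          then (χ ((B : Matrix (Fin 3) (Fin 3) F) 0 0) : ℂ) else 0) := by
      intro t
      rw [mul_val, tGL_val, mul_transvection_apply_of_ne _ _ _ _ h10.symm,
        mul_transvection_apply_of_ne _ _ _ _ h10.symm, mul_transvection_apply_of_ne _ _ _ _ h10.symm,
        mul_transvection_apply_same]
    refine (Finset.sum_congr rfl fun t _ => key t).trans ?_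
    by_cases hb1 : (B : Matrix (Fin 3) (Fin 3) F) 1 0 = 0
    · by_cases hb2 : (B : Matrix (Fin 3) (Fin 3) F) 2 0 = 0
      · simp only [hb1, hb2, if_true, true_and]
        exact sum_root _ _ (entry00_ne_zero B hb1 hb2) _
      · simp [hb1, hb2]
    · simp [hb1]
  -- Step 4 : introduce the condition B 0 2 = 0
  have step4 : ∑ B : GL (Fin 3) F, (if ((B : Matrix (Fin 3) (Fin 3) F) 1 0 = 0
            ∧ (B : Matrix (Fin 3) (Fin 3) F) 2 0 = 0
            ∧ (B : Matrix (Fin 3) (Fin 3) F) 0 1 = 0)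
          then (χ ((B : Matrix (Fin 3) (Fin 3) F) 0 0) : ℂ) else 0)
      = qc * ∑ B : GL (Fin 3) F, (if ((B : Matrix (Fin 3) (Fin 3) F) 1 0 = 0
            ∧ (B : Matrix (Fin 3) (Fin 3) F) 2 0 = 0
            ∧ (B : Matrix (Fin 3) (Fin 3) F) 0 1 = 0
            ∧ (B : Matrix (Fin 3) (Fin 3) F) 0 2 = 0)
          then (χ ((B : Matrix (Fin 3) (Fin 3) F) 0 0) : ℂ) else 0) := by
    refine avgB _ _ (fun t => Equiv.mulRight (tGL 0 2 h02 t)) fun B => ?_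
    simp only [Equiv.coe_mulRight]
    have key : ∀ t : F, (if (((B * tGL 0 2 h02 t : GL (Fin 3) F) : Matrix (Fin 3) (Fin 3) F) 1 0 = 0
            ∧ ((B * tGL 0 2 h02 t : GL (Fin 3) F) : Matrix (Fin 3) (Fin 3) F) 2 0 = 0
            ∧ ((B * tGL 0 2 h02 t : GL (Fin 3) F) : Matrix (Fin 3) (Fin 3) F) 0 1 = 0
            ∧ ((B * tGL 0 2 h02 t : GL (Fin 3) F) : Matrix (Fin 3) (Fin 3) F) 0 2 = 0)
          then (χ (((B * tGL 0 2 h02 t : GL (Fin 3) F) : Matrix (Fin 3) (Fin 3) F) 0 0) : ℂ) else 0)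
        = (if ((B : Matrix (Fin 3) (Fin 3) F) 1 0 = 0
            ∧ (B : Matrix (Fin 3) (Fin 3) F) 2 0 = 0
            ∧ (B : Matrix (Fin 3) (Fin 3) F) 0 1 = 0
            ∧ (B : Matrix (Fin 3) (Fin 3) F) 0 2 + t * (B : Matrix (Fin 3) (Fin 3) F) 0 0 = 0)
          then (χ ((B : Matrix (Fin 3) (Fin 3) F) 0 0) : ℂ) else 0) := by
      intro t
      rw [mul_val, tGL_val, mul_transvection_apply_of_ne _ _ _ _ h20.symm,
        mul_transvection_apply_of_ne _ _ _ _ h20.symm, mul_transvection_apply_of_ne _ _ _ _ h12,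
        mul_transvection_apply_of_ne _ _ _ _ h20.symm, mul_transvection_apply_same]
    refine (Finset.sum_congr rfl fun t _ => key t).trans ?_
    by_cases hb1 : (B : Matrix (Fin 3) (Fin 3) F) 1 0 = 0
    · by_cases hb2 : (B : Matrix (Fin 3) (Fin 3) F) 2 0 = 0
      · by_cases hb3 : (B : Matrix (Fin 3) (Fin 3) F) 0 1 = 0
        · simp only [hb1, hb2, hb3, if_true, true_and]
          exact sum_root _ _ (entry00_ne_zero B hb1 hb2) _
        · simp [hb1, hb2, hb3]
      · simp [hb1, hb2]
    · simp [hb1]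
  rw [step1, step2, step3, step4, sum_GL_to_matrix χ, matrix_sum_eval χ hχ]
  have hq1 : 1 ≤ Fintype.card F := Fintype.card_pos
  have hc1 : (1:ℕ) ≤ Fintype.card F ^ 2 := Nat.one_le_pow _ _ hq1
  have hc2 : Fintype.card F ≤ Fintype.card F ^ 2 := Nat.le_self_pow (by norm_num) _
  rw [Nat.cast_mul, Nat.cast_sub hc1, Nat.cast_sub hc2, Nat.cast_pow, Nat.cast_one, hqc]
  ring
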